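/- arXiv:1804.07021 — 4 statements merged into one kernel-verified Lean document; each statement's English description precedes it below -/
import Mathlib

section
/- Let R_n be the kernel of the mod-n winding number map on F_{s-1}. As a module over ℤ[ℤ/nℤ], where the generator σ of ℤ/nℤ acts by conjugation by x_1, the abelianization R_n/R_n' is isomorphic to ℤ[ℤ/nℤ]^{s-2} ⊕ ℤ, with the free summands generated by β_j = x_j x_1^{-1} (2 ≤ j ≤ s-1) and the trivial summand generated by x_1^n. -/
set_option linter.unusedSectionVars false
set_option maxHeartbeats 1000000

open Multiplicative

namespace Stmt4

variable {ι : Type} [DecidableEq ι] [Fintype ι] (n : ℕ) [NeZero n] (i₀ : ι)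

/-- exponent sum -/
def ε : FreeGroup ι →* Multiplicative ℤ := FreeGroup.lift fun _ => ofAdd 1

def red : Multiplicative ℤ →* Multiplicative (ZMod n) :=
  AddMonoidHom.toMultiplicative (Int.castAddHom (ZMod n))

def alp : FreeGroup ι →* Multiplicative (ZMod n) := (red n).comp ε

@[simp] lemma ε_of (i : ι) : ε (FreeGroup.of i) = ofAdd (1 : ℤ) := FreeGroup.lift_apply_of

@[simp] lemma red_apply (m : Multiplicative ℤ) : red n m = ofAdd ((m.toAdd : ℤ) : ZMod n) := rfl

lemma alp_apply (w : FreeGroup ι) : alp n w = ofAdd (((ε w).toAdd : ℤ) : ZMod n) := rfl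

lemma mem_ker_iff (w : FreeGroup ι) : w ∈ (alp (ι := ι) n).ker ↔ (n : ℤ) ∣ (ε w).toAdd := by
  rw [MonoidHom.mem_ker, alp_apply, ← ofAdd_zero,
    Equiv.apply_eq_iff_eq (β := Multiplicative (ZMod n)) (ofAdd)]
  exact ZMod.intCast_zmod_eq_zero_iff_dvd _ n

instance : ((alp (ι := ι) n).ker).Normal := MonoidHom.normal_ker _

/-- conjugation action of the free group on the abelianization of the kernel -/
noncomputable def conjA : FreeGroup ι →* MulAut (Abelianization (alp (ι := ι) n).ker) :=
  MonoidHom.mk' (fun g => (MulAut.conjNormal (H := (alp (ι := ι) n).ker) g).abelianizationCongr)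
    (by
      intro g h
      show (MulAut.conjNormal (g * h)).abelianizationCongr = _
      rw [map_mul]
      exact (abelianizationCongr_trans _ _).symm)

lemma conjA_of (g : FreeGroup ι) (r : (alp (ι := ι) n).ker) :
    conjA n g (Abelianization.of r) = Abelianization.of ⟨g * ↑r * g⁻¹, (MonoidHom.normal_ker (alp (ι := ι) n)).conj_mem _ r.2 _⟩ := by
  show (MulAut.conjNormal g).abelianizationCongr (Abelianization.of r) = _
  rw [abelianizationCongr_of]
  rfl

lemma conjA_coe (r : (alp (ι := ι) n).ker) : conjA n (↑r : FreeGroup ι) = 1 := by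
  ext x
  have : ((conjA n (↑r : FreeGroup ι)).toMonoidHom) = MonoidHom.id _ := by
    apply Abelianization.hom_ext
    ext s
    show conjA n ↑r (Abelianization.of s) = Abelianization.of s
    rw [conjA_of]
    have h1 : (⟨↑r * ↑s * (↑r)⁻¹, _⟩ : (alp (ι := ι) n).ker) = r * s * r⁻¹ := rfl
    rw [h1, map_mul, map_mul, map_inv, mul_comm, inv_mul_cancel_left]
  show (conjA n (↑r : FreeGroup ι)).toMonoidHom x = x
  rw [this]; rfl

/-! ### The module side -/

abbrev Mod (n : ℕ) (i₀ : ι) : Type := {j : ι // j ≠ i₀} → MonoidAlgebra ℤ (Multiplicative (ZMod n))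

/-- left multiplication by a group element, componentwise -/
noncomputable def mulSingle (g : Multiplicative (ZMod n)) : Mod n i₀ ≃+ Mod n i₀ where
  toFun v := fun j => MonoidAlgebra.single g 1 * v j
  invFun v := fun j => MonoidAlgebra.single g⁻¹ 1 * v j
  left_inv v := funext fun j => by
    show MonoidAlgebra.single g⁻¹ 1 * (MonoidAlgebra.single g 1 * v j) = v j
    rw [← mul_assoc, MonoidAlgebra.single_mul_single, inv_mul_cancel, one_mul,
      ← MonoidAlgebra.one_def, one_mul]
  right_inv v := funext fun j => by
    show MonoidAlgebra.single g 1 * (MonoidAlgebra.single g⁻¹ 1 * v j) = v j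
    rw [← mul_assoc, MonoidAlgebra.single_mul_single, mul_inv_cancel, one_mul,
      ← MonoidAlgebra.one_def, one_mul]
  map_add' v w := funext fun j => mul_add _ _ _

lemma mulSingle_mul (g h : Multiplicative (ZMod n)) (v : Mod n i₀) :
    mulSingle n i₀ g (mulSingle n i₀ h v) = mulSingle n i₀ (g * h) v := by
  funext j
  show MonoidAlgebra.single g 1 * (MonoidAlgebra.single h 1 * v j) = _
  rw [← mul_assoc, MonoidAlgebra.single_mul_single, one_mul]
  rfl

lemma mulSingle_one (v : Mod n i₀) : mulSingle n i₀ 1 v = v := by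
  funext j
  show MonoidAlgebra.single 1 1 * v j = v j
  rw [← MonoidAlgebra.one_def, one_mul]

/-- the twisting action used on the module side -/
noncomputable def sigAut : Multiplicative ℤ →* MulAut (Multiplicative (Mod n i₀)) :=
  MonoidHom.mk' (fun m => AddEquiv.toMultiplicative (mulSingle n i₀ (red n m)))
    (by
      intro a b
      ext v : 1
      show ofAdd (mulSingle n i₀ (red n (a * b)) v.toAdd) =
        ofAdd (mulSingle n i₀ (red n a) (mulSingle n i₀ (red n b) v.toAdd))
      rw [mulSingle_mul, map_mul])

lemma sigAut_apply (m : Multiplicative ℤ) (v : Mod n i₀) :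
    sigAut n i₀ m (ofAdd v) = ofAdd (mulSingle n i₀ (red n m) v) := rfl

lemma sigAut_ker {m : Multiplicative ℤ} (h : (n : ℤ) ∣ m.toAdd) : sigAut n i₀ m = 1 := by
  have hred : red n m = 1 := by
    rw [red_apply, ← ofAdd_zero]
    exact congrArg ofAdd ((ZMod.intCast_zmod_eq_zero_iff_dvd _ n).2 h)
  ext v : 1
  show ofAdd (mulSingle n i₀ (red n m) v.toAdd) = v
  rw [hred, mulSingle_one]
  rfl

/-- generators sent into the semidirect product -/
noncomputable def mgen (i : ι) : Mod n i₀ := if h : i = i₀ then 0 else Pi.single ⟨i, h⟩ 1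

noncomputable def ΛM : FreeGroup ι →* (Multiplicative (Mod n i₀) ⋊[sigAut n i₀] Multiplicative ℤ) :=
  FreeGroup.lift fun i => ⟨ofAdd (mgen n i₀ i), ofAdd 1⟩

lemma ΛM_right (w : FreeGroup ι) : (ΛM n i₀ w).right = ε w := by
  have : (SemidirectProduct.rightHom.comp (ΛM n i₀)) = ε (ι := ι) := by
    apply FreeGroup.ext_hom
    intro a
    show (ΛM n i₀ (FreeGroup.of a)).right = ε (FreeGroup.of a)
    rw [ε_of]
    show (SemidirectProduct.rightHom (ΛM n i₀ (FreeGroup.of a))) = _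
    rw [ΛM, FreeGroup.lift_apply_of]
    rfl
  exact DFunLike.congr_fun this w

lemma ΛM_of (i : ι) :
    ΛM n i₀ (FreeGroup.of i) = ⟨ofAdd (mgen n i₀ i), ofAdd 1⟩ := FreeGroup.lift_apply_of

lemma ΛM_of_i₀ : ΛM n i₀ (FreeGroup.of i₀) = SemidirectProduct.inr (ofAdd 1) := by
  rw [ΛM_of]
  have : mgen n i₀ i₀ = 0 := dif_pos rfl
  rw [this]
  rfl

/-! ### elements and classes -/

lemma mem_bj {j : ι} : FreeGroup.of j * (FreeGroup.of i₀)⁻¹ ∈ (alp (ι := ι) n).ker := by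
  rw [MonoidHom.mem_ker, map_mul, map_inv]
  show alp n (FreeGroup.of j) * (alp n (FreeGroup.of i₀))⁻¹ = 1
  rw [alp_apply, alp_apply, ε_of, ε_of, mul_inv_cancel]

lemma mem_xi : (FreeGroup.of i₀) ^ n ∈ (alp (ι := ι) n).ker := by
  rw [MonoidHom.mem_ker, map_pow]
  show (alp n (FreeGroup.of i₀)) ^ n = 1
  rw [alp_apply, ε_of]
  show ofAdd ((1 : ℤ) : ZMod n) ^ n = 1
  rw [← ofAdd_nsmul, ← ofAdd_zero]
  congr 1
  push_cast
  simp [ZMod.natCast_self]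

noncomputable def bj (j : {j : ι // j ≠ i₀}) : (alp (ι := ι) n).ker :=
  ⟨FreeGroup.of j.1 * (FreeGroup.of i₀)⁻¹, mem_bj n i₀⟩

noncomputable def xi : (alp (ι := ι) n).ker := ⟨(FreeGroup.of i₀) ^ n, mem_xi n i₀⟩

abbrev AA (n : ℕ) [NeZero n] (ι : Type) [DecidableEq ι] [Fintype ι] : Type :=
  Additive (Abelianization (alp (ι := ι) n).ker)

/-- conjugation by `x₁ ^ m`, additively -/
noncomputable def cEnd (m : ℤ) : AA n ι →+ AA n ι :=
  MonoidHom.toAdditive (conjA n ((FreeGroup.of i₀) ^ m)).toMonoidHom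

lemma cEnd_of (m : ℤ) (r : (alp (ι := ι) n).ker) :
    cEnd n i₀ m (Additive.ofMul (Abelianization.of r)) =
      Additive.ofMul (Abelianization.of
        ⟨(FreeGroup.of i₀) ^ m * ↑r * ((FreeGroup.of i₀) ^ m)⁻¹,
          (MonoidHom.normal_ker (alp (ι := ι) n)).conj_mem _ r.2 _⟩) := by
  show Additive.ofMul (conjA n ((FreeGroup.of i₀) ^ m) (Abelianization.of r)) = _
  rw [conjA_of]

lemma cEnd_cEnd (m m' : ℤ) (a : AA n ι) :
    cEnd n i₀ m (cEnd n i₀ m' a) = cEnd n i₀ (m + m') a := by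
  show Additive.ofMul (conjA n _ (conjA n _ a.toMul)) = Additive.ofMul (conjA n _ a.toMul)
  rw [← MulAut.mul_apply, ← map_mul, ← zpow_add]

lemma cEnd_zero (a : AA n ι) : cEnd n i₀ 0 a = a := by
  show Additive.ofMul (conjA n ((FreeGroup.of i₀) ^ (0:ℤ)) a.toMul) = a
  rw [zpow_zero, map_one]
  rfl

lemma cEnd_congr {m m' : ℤ} (h : ((m : ZMod n)) = (m' : ZMod n)) (a : AA n ι) :
    cEnd n i₀ m a = cEnd n i₀ m' a := by
  have hd : (n : ℤ) ∣ m' - m := by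
    rw [← ZMod.intCast_zmod_eq_zero_iff_dvd, Int.cast_sub, sub_eq_zero, ← h]
  obtain ⟨t, ht⟩ := hd
  have h1 : ∀ b : AA n ι, cEnd n i₀ ((n : ℤ) * t) b = b := by
    intro b
    have hx : (FreeGroup.of i₀ : FreeGroup ι) ^ ((n : ℤ) * t) = ((xi n i₀ : (alp (ι := ι) n).ker) : FreeGroup ι) ^ t := by
      rw [zpow_mul, zpow_natCast]
      rfl
    show Additive.ofMul (conjA n _ b.toMul) = b
    rw [hx, ← SubgroupClass.coe_zpow, conjA_coe]
    rfl
  have : m' = (n : ℤ) * t + m := by omega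
  rw [this, ← cEnd_cEnd, h1]

/-! ### the map Ψ -/

noncomputable def classBeta (j : {j : ι // j ≠ i₀}) : AA n ι :=
  Additive.ofMul (Abelianization.of (bj n i₀ j))

noncomputable def PsiCoord (j : {j : ι // j ≠ i₀}) :
    MonoidAlgebra ℤ (Multiplicative (ZMod n)) →+ AA n ι :=
  (Finsupp.liftAddHom fun (g : Multiplicative (ZMod n)) =>
    zmultiplesHom _ (cEnd n i₀ (g.toAdd.val : ℤ) (classBeta n i₀ j))).comp
    MonoidAlgebra.coeffAddEquiv.toAddMonoidHom

lemma PsiCoord_single (j : {j : ι // j ≠ i₀}) (g : Multiplicative (ZMod n)) (c : ℤ) :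
    PsiCoord n i₀ j (MonoidAlgebra.single g c) =
      c • cEnd n i₀ (g.toAdd.val : ℤ) (classBeta n i₀ j) :=
  Finsupp.liftAddHom_apply_single _ _ _

noncomputable def PsiM : Mod n i₀ →+ AA n ι :=
  ∑ j : {j : ι // j ≠ i₀}, (PsiCoord n i₀ j).comp (Pi.evalAddMonoidHom _ j)

lemma PsiM_single (j : {j : ι // j ≠ i₀}) (x : MonoidAlgebra ℤ (Multiplicative (ZMod n))) :
    PsiM n i₀ (Pi.single j x) = PsiCoord n i₀ j x := by
  rw [PsiM, AddMonoidHom.finset_sum_apply]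
  rw [Finset.sum_eq_single j]
  · rw [AddMonoidHom.comp_apply, Pi.evalAddMonoidHom_apply, Pi.single_eq_same]
  · intro b _ hb
    rw [AddMonoidHom.comp_apply, Pi.evalAddMonoidHom_apply, Pi.single_eq_of_ne hb,
      map_zero]
  · intro h
    exact absurd (Finset.mem_univ j) h

noncomputable def Psi : (Mod n i₀ × ℤ) →+ AA n ι :=
  (PsiM n i₀).coprod (zmultiplesHom _ (Additive.ofMul (Abelianization.of (xi n i₀))))

/-! ### the intertwining lemma -/

lemma val_coe (a : ZMod n) : (((a.val : ℤ) : ZMod n)) = a := by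
  rw [Int.cast_natCast, ZMod.natCast_val, ZMod.cast_id]

lemma mulSingle_pisingle (g : Multiplicative (ZMod n)) (j : {j : ι // j ≠ i₀})
    (y : MonoidAlgebra ℤ (Multiplicative (ZMod n))) :
    mulSingle n i₀ g (Pi.single j y) = Pi.single j (MonoidAlgebra.single g 1 * y) := by
  have hv : ∀ v : Mod n i₀, mulSingle n i₀ g v = fun j' => MonoidAlgebra.single g 1 * v j' :=
    fun _ => rfl
  rw [hv]
  funext j'
  by_cases h : j' = j
  · subst h; rw [Pi.single_eq_same, Pi.single_eq_same]
  · rw [Pi.single_eq_of_ne h, Pi.single_eq_of_ne h, mul_zero]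

lemma dagger (m : ℤ) (v : Mod n i₀) :
    PsiM n i₀ (mulSingle n i₀ (red n (ofAdd m)) v) = cEnd n i₀ m (PsiM n i₀ v) := by
  have key : (PsiM n i₀).comp (mulSingle n i₀ (red n (ofAdd m))).toAddMonoidHom =
      (cEnd n i₀ m).comp (PsiM n i₀) := by
    apply AddMonoidHom.functions_ext
    intro j x
    induction x using MonoidAlgebra.induction_linear with
    | zero => rw [Pi.single_zero]; simp
    | add f g hf hg =>
        rw [Pi.single_add, map_add, map_add, hf, hg]
    | single g c =>
        show PsiM n i₀ (mulSingle n i₀ (red n (ofAdd m)) (Pi.single j (MonoidAlgebra.single g c))) =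
          cEnd n i₀ m (PsiM n i₀ (Pi.single j (MonoidAlgebra.single g c)))
        rw [mulSingle_pisingle, MonoidAlgebra.single_mul_single, one_mul, PsiM_single,
          PsiM_single, PsiCoord_single, PsiCoord_single, map_zsmul, cEnd_cEnd]
        refine congrArg (c • ·) (cEnd_congr n i₀ ?_ _)
        rw [val_coe, toAdd_mul, red_apply, toAdd_ofAdd]
        push_cast
        rw [ZMod.natCast_val, ZMod.cast_id, toAdd_ofAdd]
  exact DFunLike.congr_fun key v

lemma mem_rho (w : FreeGroup ι) :
    w * (FreeGroup.of i₀) ^ (-(ε w).toAdd) ∈ (alp (ι := ι) n).ker := by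
  rw [mem_ker_iff, map_mul, toAdd_mul, map_zpow, ε_of, toAdd_zpow, toAdd_ofAdd]
  simp

lemma star (w : FreeGroup ι) :
    PsiM n i₀ ((ΛM n i₀ w).left.toAdd) =
      Additive.ofMul (Abelianization.of
        ⟨w * (FreeGroup.of i₀) ^ (-(ε w).toAdd), mem_rho n i₀ w⟩) := by
  have hpure : ∀ z : ι, (pure z : FreeGroup ι) = FreeGroup.of z := fun _ => rfl
  induction w using FreeGroup.induction_on with
  | C1 =>
      have h1 : (⟨(1 : FreeGroup ι) * (FreeGroup.of i₀) ^ (-(ε 1).toAdd), mem_rho n i₀ 1⟩ :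
          (alp (ι := ι) n).ker) = 1 := by
        apply Subtype.ext
        show (1 : FreeGroup ι) * (FreeGroup.of i₀) ^ (-(ε (1 : FreeGroup ι)).toAdd) = 1
        rw [map_one]
        show (1 : FreeGroup ι) * (FreeGroup.of i₀) ^ (-(0:ℤ)) = 1
        group
      rw [h1, map_one, map_one]
      show PsiM n i₀ 0 = _
      rw [map_zero, ofMul_one]
  | of x =>
      show PsiM n i₀ ((ΛM n i₀ (FreeGroup.of x)).left.toAdd) = _
      rw [ΛM_of]
      by_cases hx : x = i₀
      · have h0 : mgen n i₀ x = 0 := dif_pos hx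
        show PsiM n i₀ (mgen n i₀ x) = _
        rw [h0, map_zero]
        have h1 : (⟨FreeGroup.of x * (FreeGroup.of i₀) ^ (-(ε (FreeGroup.of x)).toAdd),
            mem_rho n i₀ _⟩ : (alp (ι := ι) n).ker) = 1 := by
          apply Subtype.ext
          show FreeGroup.of x * (FreeGroup.of i₀) ^ (-(ε (FreeGroup.of x)).toAdd) = 1
          rw [ε_of, toAdd_ofAdd, hx]
          group
        rw [h1, map_one, ofMul_one]
      · have h0 : mgen n i₀ x = Pi.single (⟨x, hx⟩ : {j : ι // j ≠ i₀}) 1 := dif_neg hx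
        show PsiM n i₀ (mgen n i₀ x) = _
        rw [h0, PsiM_single, MonoidAlgebra.one_def, PsiCoord_single, one_smul]
        have hval : ((toAdd (1 : Multiplicative (ZMod n))).val : ℤ) = 0 := by
          show ((0 : ZMod n).val : ℤ) = 0
          rw [ZMod.val_zero]; rfl
        rw [hval, cEnd_zero]
        have h1 : (⟨FreeGroup.of x * (FreeGroup.of i₀) ^ (-(ε (FreeGroup.of x)).toAdd),
            mem_rho n i₀ _⟩ : (alp (ι := ι) n).ker) = bj n i₀ ⟨x, hx⟩ := by
          apply Subtype.ext
          show FreeGroup.of x * (FreeGroup.of i₀) ^ (-(ε (FreeGroup.of x)).toAdd) =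
            FreeGroup.of x * (FreeGroup.of i₀)⁻¹
          rw [ε_of, toAdd_ofAdd]
          group
        rw [classBeta, h1]
  | inv_of x ih =>
      have h1 : ((ΛM n i₀ (FreeGroup.of x))⁻¹).left.toAdd =
          mulSingle n i₀ (red n (ofAdd (-1 : ℤ)))
            (-(ΛM n i₀ (FreeGroup.of x)).left.toAdd) := by
        rw [SemidirectProduct.inv_left, ΛM_right, ε_of]
        rfl
      rw [map_inv, h1, dagger, map_neg, ih, map_neg, cEnd_of]
      rw [← ofMul_inv, ← map_inv]
      refine congrArg Additive.ofMul (congrArg Abelianization.of (Subtype.ext ?_))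
      show ((FreeGroup.of i₀ : FreeGroup ι) ^ (-1 : ℤ) *
          (FreeGroup.of x * (FreeGroup.of i₀) ^ (-(ε (FreeGroup.of x)).toAdd)) *
          ((FreeGroup.of i₀ : FreeGroup ι) ^ (-1 : ℤ))⁻¹)⁻¹ =
        (FreeGroup.of x)⁻¹ * (FreeGroup.of i₀) ^ (-(ε (FreeGroup.of x)⁻¹).toAdd)
      rw [map_inv, ε_of, toAdd_inv, toAdd_ofAdd]
      group
  | mul x y ihx ihy =>
      rw [map_mul, SemidirectProduct.mul_left, toAdd_mul, map_add, ΛM_right]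
      have h2 : (sigAut n i₀ (ε x) ((ΛM n i₀ y).left)).toAdd =
          mulSingle n i₀ (red n (ofAdd ((ε x).toAdd))) ((ΛM n i₀ y).left.toAdd) := by
        rw [ofAdd_toAdd]
        rfl
      rw [h2, dagger, ihx, ihy, cEnd_of, ← ofMul_mul, ← map_mul]
      refine congrArg Additive.ofMul (congrArg Abelianization.of (Subtype.ext ?_))
      show (x * (FreeGroup.of i₀) ^ (-(ε x).toAdd)) *
          ((FreeGroup.of i₀ : FreeGroup ι) ^ ((ε x).toAdd) *
            (y * (FreeGroup.of i₀) ^ (-(ε y).toAdd)) *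
            ((FreeGroup.of i₀ : FreeGroup ι) ^ ((ε x).toAdd))⁻¹) =
        (x * y) * (FreeGroup.of i₀) ^ (-(ε (x * y)).toAdd)
      rw [map_mul, toAdd_mul]
      group

/-! ### the map Φ -/

lemma dvd_eps (a : (alp (ι := ι) n).ker) : (n : ℤ) ∣ (ε (↑a : FreeGroup ι)).toAdd :=
  (mem_ker_iff n _).1 a.2

lemma nne : ((n : ℤ) ≠ 0) := by exact_mod_cast NeZero.ne n

noncomputable def PhiKer : (alp (ι := ι) n).ker →* Multiplicative (Mod n i₀ × ℤ) :=
  MonoidHom.mk'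
    (fun a => ofAdd ((ΛM n i₀ ↑a).left.toAdd, (ε (↑a : FreeGroup ι)).toAdd / n))
    (by
      intro a b
      rw [← ofAdd_add]
      congr 1
      refine Prod.ext ?_ ?_
      · show ((ΛM n i₀ (↑a * ↑b)).left).toAdd = _
        rw [map_mul, SemidirectProduct.mul_left, ΛM_right, sigAut_ker n i₀ (dvd_eps n a),
          toAdd_mul]
        rfl
      · show (ε ((↑a : FreeGroup ι) * (↑b : FreeGroup ι))).toAdd / n = _
        obtain ⟨k, hk⟩ := dvd_eps n a
        obtain ⟨l, hl⟩ := dvd_eps n b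
        rw [map_mul, toAdd_mul, hk, hl, ← mul_add, Int.mul_ediv_cancel_left _ (nne n),
          Int.mul_ediv_cancel_left _ (nne n), Int.mul_ediv_cancel_left _ (nne n)]
        rfl)

noncomputable def eHom : AA n ι →+ (Mod n i₀ × ℤ) :=
  MonoidHom.toAdditiveLeft (Abelianization.lift (PhiKer n i₀))

lemma eHom_of (a : (alp (ι := ι) n).ker) :
    eHom n i₀ (Additive.ofMul (Abelianization.of a)) =
      ((ΛM n i₀ ↑a).left.toAdd, (ε (↑a : FreeGroup ι)).toAdd / n) := by
  show toAdd (Abelianization.lift (PhiKer n i₀) (Abelianization.of a)) = _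
  rw [Abelianization.lift_apply_of]
  rfl

lemma Psi_apply (v : Mod n i₀) (c : ℤ) :
    Psi n i₀ (v, c) = PsiM n i₀ v + c • Additive.ofMul (Abelianization.of (xi n i₀)) := by
  rw [Psi, AddMonoidHom.coprod_apply]
  rfl

lemma PsiPhi (a : (alp (ι := ι) n).ker) :
    Psi n i₀ (eHom n i₀ (Additive.ofMul (Abelianization.of a))) =
      Additive.ofMul (Abelianization.of a) := by
  rw [eHom_of, Psi_apply, star]
  obtain ⟨k, hk⟩ := dvd_eps n a
  have hdiv : (ε (↑a : FreeGroup ι)).toAdd / (n : ℤ) = k := by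
    rw [hk, Int.mul_ediv_cancel_left _ (nne n)]
  rw [hdiv, ← ofMul_zpow, ← map_zpow, ← ofMul_mul, ← map_mul]
  refine congrArg Additive.ofMul (congrArg Abelianization.of (Subtype.ext ?_))
  show (↑a * (FreeGroup.of i₀) ^ (-(ε (↑a : FreeGroup ι)).toAdd)) * ↑(xi n i₀ ^ k) =
    (↑a : FreeGroup ι)
  rw [SubgroupClass.coe_zpow]
  show ↑a * (FreeGroup.of i₀) ^ (-(ε (↑a : FreeGroup ι)).toAdd) *
    ((FreeGroup.of i₀ ^ n : FreeGroup ι)) ^ k = _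
  rw [hk, ← zpow_natCast (FreeGroup.of i₀) n, ← zpow_mul]
  group

/-! ### computations of `eHom` on generators -/

lemma conj_left {h : Multiplicative ℤ}
    (p : Multiplicative (Mod n i₀) ⋊[sigAut n i₀] Multiplicative ℤ) :
    (SemidirectProduct.inr h * p * (SemidirectProduct.inr h)⁻¹).left = sigAut n i₀ h p.left := by
  simp [SemidirectProduct.mul_left, SemidirectProduct.inv_left]

lemma ΛM_xi_pow (m : ℤ) :
    ΛM n i₀ ((FreeGroup.of i₀) ^ m) = SemidirectProduct.inr (ofAdd m) := by
  rw [map_zpow, ΛM_of_i₀, ← map_zpow]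
  congr 1
  rw [← ofAdd_zsmul, smul_eq_mul, mul_one]

lemma ΛM_bj (j : {j : ι // j ≠ i₀}) :
    (ΛM n i₀ (↑(bj n i₀ j) : FreeGroup ι)).left = ofAdd (Pi.single j 1) := by
  have h0 : mgen n i₀ j.1 = Pi.single j 1 := by
    rw [mgen, dif_neg j.2]
  show (ΛM n i₀ (FreeGroup.of j.1 * (FreeGroup.of i₀)⁻¹)).left = _
  rw [map_mul, map_inv, ΛM_of_i₀, ΛM_of, SemidirectProduct.mul_left,
    SemidirectProduct.inv_left, h0]
  simp

lemma eps_conj (m : ℤ) (w : FreeGroup ι) :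
    (ε ((FreeGroup.of i₀) ^ m * w * ((FreeGroup.of i₀) ^ m)⁻¹)).toAdd = (ε w).toAdd := by
  simp only [map_mul, map_inv, map_zpow, ε_of, toAdd_mul, toAdd_inv, toAdd_zpow, toAdd_ofAdd,
    smul_eq_mul, mul_one]
  omega

lemma eHom_conj_gen (m : ℤ) (j : {j : ι // j ≠ i₀}) (c : ℤ) :
    eHom n i₀ (c • cEnd n i₀ m (classBeta n i₀ j)) =
      (Pi.single j (MonoidAlgebra.single (ofAdd ((m : ZMod n))) c), 0) := by
  rw [map_zsmul, classBeta, cEnd_of, eHom_of]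
  have h1 : ΛM n i₀ ((FreeGroup.of i₀) ^ m * ↑(bj n i₀ j) * ((FreeGroup.of i₀) ^ m)⁻¹) =
      SemidirectProduct.inr (ofAdd m) * ΛM n i₀ ↑(bj n i₀ j) *
        (SemidirectProduct.inr (ofAdd m))⁻¹ := by
    rw [map_mul, map_mul, map_inv, ΛM_xi_pow]
  rw [h1]
  have h2 := conj_left n i₀ (h := ofAdd m) (ΛM n i₀ ↑(bj n i₀ j))
  rw [h2, ΛM_bj, sigAut_apply, toAdd_ofAdd, mulSingle_pisingle, mul_one, eps_conj i₀]
  have h3 : (ε (↑(bj n i₀ j) : FreeGroup ι)).toAdd = 0 := by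
    show (ε (FreeGroup.of j.1 * (FreeGroup.of i₀)⁻¹)).toAdd = 0
    rw [map_mul, map_inv, toAdd_mul, toAdd_inv, ε_of, ε_of]
    simp
  rw [h3, red_apply, toAdd_ofAdd, Int.zero_ediv, Prod.smul_mk, smul_zero, ← Pi.single_smul,
    MonoidAlgebra.smul_single', mul_one]

lemma eHom_xi : eHom n i₀ (Additive.ofMul (Abelianization.of (xi n i₀))) = (0, 1) := by
  rw [eHom_of]
  have h1 : ΛM n i₀ (↑(xi n i₀) : FreeGroup ι) = SemidirectProduct.inr (ofAdd (n : ℤ)) := by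
    show ΛM n i₀ ((FreeGroup.of i₀) ^ n) = _
    rw [← zpow_natCast (FreeGroup.of i₀) n, ΛM_xi_pow]
  have h2 : (ε (↑(xi n i₀) : FreeGroup ι)).toAdd = (n : ℤ) := by
    show (ε ((FreeGroup.of i₀) ^ n)).toAdd = (n : ℤ)
    rw [map_pow, ε_of, toAdd_pow, toAdd_ofAdd]
    simp
  rw [h1, h2, Int.ediv_self (nne n)]
  rfl

lemma PhiPsi : (eHom n i₀).comp (Psi n i₀) = AddMonoidHom.id _ := by
  refine AddMonoidHom.ext fun p => ?_
  obtain ⟨v, c⟩ := p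
  have hv : ∀ v : Mod n i₀, (eHom n i₀) (PsiM n i₀ v) = (v, 0) := by
    have key : (eHom n i₀).comp (PsiM n i₀) = (AddMonoidHom.inl (Mod n i₀) ℤ) := by
      apply AddMonoidHom.functions_ext
      intro j x
      induction x using MonoidAlgebra.induction_linear with
      | zero => rw [Pi.single_zero]; simp; rfl
      | add f g hf hg => rw [Pi.single_add, map_add, map_add, hf, hg]
      | single g c =>
          rw [AddMonoidHom.comp_apply, PsiM_single, PsiCoord_single, AddMonoidHom.inl_apply,
            eHom_conj_gen, val_coe, ofAdd_toAdd]
    intro v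
    exact DFunLike.congr_fun key v
  rw [AddMonoidHom.comp_apply, AddMonoidHom.id_apply, Psi_apply, map_add, hv, map_zsmul,
    eHom_xi]
  show ((v, 0) : Mod n i₀ × ℤ) + (c • (0:Mod n i₀), c • (1:ℤ)) = (v, c)
  rw [smul_zero, smul_eq_mul, mul_one, Prod.mk_add_mk, add_zero, zero_add]

noncomputable def E : AA n ι ≃+ (Mod n i₀ × ℤ) where
  toFun := eHom n i₀
  invFun := Psi n i₀
  left_inv := by
    intro x
    obtain ⟨a, ha⟩ := Quotient.exists_rep x.toMul
    have h : Additive.ofMul (Abelianization.of a) = x := congrArg Additive.ofMul ha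
    rw [← h]
    exact PsiPhi n i₀ a
  right_inv := fun p => DFunLike.congr_fun (PhiPsi n i₀) p
  map_add' := (eHom n i₀).map_add

lemma E_apply (x : AA n ι) : E n i₀ x = eHom n i₀ x := rfl

lemma E_conj (a : (alp (ι := ι) n).ker) :
    E n i₀ (Additive.ofMul (Abelianization.of
        (⟨FreeGroup.of i₀ * ↑a * (FreeGroup.of i₀)⁻¹,
          (MonoidHom.normal_ker (alp (ι := ι) n)).conj_mem ↑a a.2 _⟩ : (alp (ι := ι) n).ker))) =
      ((fun j => MonoidAlgebra.single (ofAdd (1 : ZMod n)) (1:ℤ) *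
          (E n i₀ (Additive.ofMul (Abelianization.of a))).1 j),
        (E n i₀ (Additive.ofMul (Abelianization.of a))).2) := by
  simp only [E_apply]
  rw [eHom_of, eHom_of]
  refine Prod.ext ?_ ?_
  · have h1 : ΛM n i₀ (FreeGroup.of i₀ * ↑a * (FreeGroup.of i₀)⁻¹) =
        SemidirectProduct.inr (ofAdd (1:ℤ)) * ΛM n i₀ ↑a *
          (SemidirectProduct.inr (ofAdd (1:ℤ)))⁻¹ := by
      rw [map_mul, map_mul, map_inv, ΛM_of_i₀]
    show (ΛM n i₀ (FreeGroup.of i₀ * ↑a * (FreeGroup.of i₀)⁻¹)).left.toAdd = _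
    rw [h1, conj_left, ← ofAdd_toAdd ((ΛM n i₀ ↑a).left), sigAut_apply, toAdd_ofAdd]
    funext j
    show MonoidAlgebra.single (red n (ofAdd (1:ℤ))) 1 * _ = _
    rw [red_apply, toAdd_ofAdd, Int.cast_one]
    rfl
  · show (ε (FreeGroup.of i₀ * (↑a : FreeGroup ι) * (FreeGroup.of i₀)⁻¹)).toAdd / (n:ℤ) = _
    have := eps_conj i₀ 1 (↑a : FreeGroup ι)
    rw [zpow_one] at this
    rw [this]

lemma E_bj (j : {j : ι // j ≠ i₀}) :
    E n i₀ (Additive.ofMul (Abelianization.of (bj n i₀ j))) = (Pi.single j 1, 0) := by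
  rw [E_apply]
  have := eHom_conj_gen n i₀ 0 j 1
  rw [one_smul, cEnd_zero, classBeta] at this
  rw [this, Int.cast_zero, ofAdd_zero, ← MonoidAlgebra.one_def]

lemma E_xi : E n i₀ (Additive.ofMul (Abelianization.of (xi n i₀))) = (0, 1) := by
  rw [E_apply]; exact eHom_xi n i₀

end Stmt4

/-- As a `ℤ[ℤ/nℤ]`-module (the generator `σ` of `ℤ/nℤ` acting by conjugation by
`x₁`), the abelianization `R_n/R_n'` is isomorphic to `ℤ[ℤ/nℤ]^{s-2} ⊕ ℤ`, with the free
summands generated by `β_j = x_j x₁⁻¹` (`2 ≤ j ≤ s-1`) and the trivial summand generated by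
`x₁^n`.  This is expressed by an additive isomorphism intertwining conjugation by `x₁` with
multiplication by `σ` on each group-ring component (and the identity on the `ℤ` component),
sending the class of `β_j` to the `j`-th standard basis vector and the class of `x₁^n` to
`(0,1)`. -/
theorem stmt_4 (s n : ℕ) (hs : 3 ≤ s) (hn : 1 ≤ n)
    (αn : FreeGroup (Fin (s-1)) →* Multiplicative (ZMod n))
    (hα : ∀ i, αn (FreeGroup.of i) = Multiplicative.ofAdd 1)
    (β : {j : Fin (s-1) // j ≠ ⟨0, by omega⟩} → αn.ker)
    (hβ : ∀ j, (β j : FreeGroup (Fin (s-1))) =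
      FreeGroup.of j.1 * (FreeGroup.of (⟨0, by omega⟩ : Fin (s-1)))⁻¹)
    (ξ : αn.ker)
    (hξ : (ξ : FreeGroup (Fin (s-1))) = FreeGroup.of (⟨0, by omega⟩ : Fin (s-1)) ^ n) :
    ∃ e : Additive (Abelianization αn.ker) ≃+
        (({j : Fin (s-1) // j ≠ ⟨0, by omega⟩} → MonoidAlgebra ℤ (Multiplicative (ZMod n))) × ℤ),
      (∀ a : αn.ker,
        e (Additive.ofMul (Abelianization.of
            (⟨FreeGroup.of (⟨0, by omega⟩ : Fin (s-1)) * ↑a *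
                (FreeGroup.of (⟨0, by omega⟩ : Fin (s-1)))⁻¹,
              (MonoidHom.normal_ker αn).conj_mem ↑a a.2 _⟩ : αn.ker))) =
          ((fun j => MonoidAlgebra.single (Multiplicative.ofAdd (1 : ZMod n)) (1:ℤ) *
              (e (Additive.ofMul (Abelianization.of a))).1 j),
            (e (Additive.ofMul (Abelianization.of a))).2)) ∧
      (∀ j, e (Additive.ofMul (Abelianization.of (β j))) = (Pi.single j 1, 0)) ∧
      e (Additive.ofMul (Abelianization.of ξ)) = (0, 1) := by
  haveI : NeZero n := ⟨by omega⟩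
  have heq : αn = Stmt4.alp n := by
    apply FreeGroup.ext_hom
    intro i
    rw [hα]
    show _ = Stmt4.alp n (FreeGroup.of i)
    rw [Stmt4.alp_apply, Stmt4.ε_of, toAdd_ofAdd, Int.cast_one]
  subst heq
  refine ⟨Stmt4.E n (⟨0, by omega⟩ : Fin (s-1)), ?_, ?_, ?_⟩
  · intro a
    exact Stmt4.E_conj n (⟨0, by omega⟩ : Fin (s-1)) a
  · intro j
    have hb : β j = Stmt4.bj n (⟨0, by omega⟩ : Fin (s-1)) j := Subtype.ext (hβ j)
    rw [hb]
    exact Stmt4.E_bj n _ j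
  · have hx : ξ = Stmt4.xi n (⟨0, by omega⟩ : Fin (s-1)) := Subtype.ext hξ
    rw [hx]
    exact Stmt4.E_xi n _
end

section
/- The Artin action of the braid generator σ_1 on the free group F_{s-1} (σ_1: x_1 ↦ x_1 x_2 x_1^{-1}, x_2 ↦ x_1, x_j ↦ x_j for j > 2) preserves the kernel R_0 of the winding number map, and its induced action on R_0/R_0' commutes with the action of t (conjugation by x_1): for every a ∈ R_0, σ_1(x_1 a x_1^{-1}) ≡ x_1 σ_1(a) x_1^{-1} modulo R_0'. -/
open scoped commutatorElement

/-- The Artin action of the braid generator `σ₁` on the free group `F_{s-1}`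
(`σ₁ : x₁ ↦ x₁x₂x₁⁻¹, x₂ ↦ x₁, x_j ↦ x_j` for `j > 2`; here `x₁ = of ⟨0,_⟩`, `x₂ = of ⟨1,_⟩`)
preserves the kernel `R₀` of the winding number map, and its induced action on `R₀/R₀'`
commutes with the action of `t` (conjugation by `x₁`): for every `a ∈ R₀`,
`σ₁(x₁ a x₁⁻¹) · (x₁ σ₁(a) x₁⁻¹)⁻¹ ∈ R₀'`. -/
theorem stmt_8 (s : ℕ) (hs : 3 ≤ s)
    (α : FreeGroup (Fin (s-1)) →* Multiplicative ℤ)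
    (hα : ∀ i, α (FreeGroup.of i) = Multiplicative.ofAdd 1)
    (σ₁ : FreeGroup (Fin (s-1)) →* FreeGroup (Fin (s-1)))
    (h1 : σ₁ (FreeGroup.of (⟨0, by omega⟩ : Fin (s-1))) =
      FreeGroup.of (⟨0, by omega⟩ : Fin (s-1)) * FreeGroup.of (⟨1, by omega⟩ : Fin (s-1)) *
        (FreeGroup.of (⟨0, by omega⟩ : Fin (s-1)))⁻¹)
    (h2 : σ₁ (FreeGroup.of (⟨1, by omega⟩ : Fin (s-1))) =
      FreeGroup.of (⟨0, by omega⟩ : Fin (s-1)))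
    (h3 : ∀ j : Fin (s-1), j ≠ ⟨0, by omega⟩ → j ≠ ⟨1, by omega⟩ →
      σ₁ (FreeGroup.of j) = FreeGroup.of j) :
    (∀ a ∈ α.ker, σ₁ a ∈ α.ker) ∧
    ∀ a ∈ α.ker,
      σ₁ (FreeGroup.of (⟨0, by omega⟩ : Fin (s-1)) * a *
          (FreeGroup.of (⟨0, by omega⟩ : Fin (s-1)))⁻¹) *
        (FreeGroup.of (⟨0, by omega⟩ : Fin (s-1)) * σ₁ a *
          (FreeGroup.of (⟨0, by omega⟩ : Fin (s-1)))⁻¹)⁻¹ ∈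
        Subgroup.map α.ker.subtype (commutator ↥α.ker) := by

  set x₁ := FreeGroup.of (⟨0, by omega⟩ : Fin (s-1)) with hx1
  set x₂ := FreeGroup.of (⟨1, by omega⟩ : Fin (s-1)) with hx2
  -- α ∘ σ₁ = α
  have hcomp : α.comp σ₁ = α := by
    apply FreeGroup.ext_hom
    intro j
    simp only [MonoidHom.comp_apply]
    by_cases hj0 : j = (⟨0, by omega⟩ : Fin (s-1))
    · subst hj0
      rw [h1]
      simp [map_mul, map_inv, hα, hx2]
    · by_cases hj1 : j = (⟨1, by omega⟩ : Fin (s-1))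
      · subst hj1
        rw [h2, hα, hα]
      · rw [h3 j hj0 hj1]
  have hker : ∀ a ∈ α.ker, σ₁ a ∈ α.ker := by
    intro a ha
    have : α (σ₁ a) = α a := DFunLike.congr_fun hcomp a
    rw [MonoidHom.mem_ker, this]
    exact ha
  refine ⟨hker, ?_⟩
  intro a ha
  have hb : σ₁ a ∈ α.ker := hker a ha
  set b := σ₁ a with hbdef
  have hu : x₁ * (x₂ * x₁⁻¹) * x₁⁻¹ ∈ α.ker := by
    rw [MonoidHom.mem_ker]
    simp [map_mul, map_inv, hα, hx1, hx2]
  have hv : x₁ * b * x₁⁻¹ ∈ α.ker := by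
    rw [MonoidHom.mem_ker]
    simp [map_mul, map_inv, hα, MonoidHom.mem_ker.mp hb]
  have key : σ₁ (x₁ * a * x₁⁻¹) * (x₁ * b * x₁⁻¹)⁻¹ =
      ⁅x₁ * (x₂ * x₁⁻¹) * x₁⁻¹, x₁ * b * x₁⁻¹⁆ := by
    rw [map_mul, map_mul, map_inv, h1, ← hbdef, commutatorElement_def]
    group
  rw [key]
  refine Subgroup.mem_map.mpr ⟨⁅(⟨_, hu⟩ : α.ker), (⟨_, hv⟩ : α.ker)⁆, ?_, rfl⟩
  exact Subgroup.commutator_mem_commutator (Subgroup.mem_top _) (Subgroup.mem_top _)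
end

section
/- Let α = Σ_{ν≥0} a_ν ℓ^ν ∈ ℤ_ℓ with digits 0 ≤ a_ν < ℓ, and let A_n = 1 + t + t^2 + ··· + t^{c_n - 1} where c_n = Σ_{ν=0}^n a_ν ℓ^ν, regarded as elements of the completed group algebra ℤ_ℓ[[ℤ_ℓ]] = lim_n ℤ_ℓ[ℤ/ℓ^n ℤ]. Then the sequence (A_n) is Cauchy and converges in ℤ_ℓ[[ℤ_ℓ]]. -/
open Finset

/-- Reindexing: a sum of `f` over `ℓ^m` consecutive integers (cast to `ZMod (ℓ^m)`)
equals the sum of `f` over all of `ZMod (ℓ^m)`. -/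
private lemma stmt11_period (ℓ m : ℕ) [Fact ℓ.Prime] (s : ℕ)
    (f : ZMod (ℓ ^ m) → MonoidAlgebra ℤ_[ℓ] (Multiplicative (ZMod (ℓ ^ m)))) :
    haveI : NeZero (ℓ ^ m) := ⟨pow_ne_zero _ (Fact.out : ℓ.Prime).pos.ne'⟩
    ∑ i ∈ Finset.range (ℓ ^ m), f ((s + i : ℕ) : ZMod (ℓ ^ m)) = ∑ x : ZMod (ℓ ^ m), f x := by
  haveI : NeZero (ℓ ^ m) := ⟨pow_ne_zero _ (Fact.out : ℓ.Prime).pos.ne'⟩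
  refine Finset.sum_nbij' (fun i => ((s + i : ℕ) : ZMod (ℓ ^ m)))
    (fun x => (x - (s : ZMod (ℓ ^ m))).val) ?_ ?_ ?_ ?_ ?_
  · intros; exact Finset.mem_univ _
  · intro x _; exact Finset.mem_range.2 (ZMod.val_lt _)
  · intro i hi
    have hi' := Finset.mem_range.1 hi
    push_cast
    rw [add_sub_cancel_left, ZMod.val_cast_of_lt hi']
  · intro x _
    push_cast
    rw [ZMod.natCast_val, ZMod.cast_id, add_sub_cancel]
  · intros; rfl

/-- Block sum: sums over `range (s + q * ℓ^m)` differ from sums over `range s`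
by `q` copies of the full-period sum. -/
private lemma stmt11_block (ℓ m : ℕ) [Fact ℓ.Prime] (s q : ℕ)
    (f : ZMod (ℓ ^ m) → MonoidAlgebra ℤ_[ℓ] (Multiplicative (ZMod (ℓ ^ m)))) :
    haveI : NeZero (ℓ ^ m) := ⟨pow_ne_zero _ (Fact.out : ℓ.Prime).pos.ne'⟩
    ∑ i ∈ Finset.range (s + q * ℓ ^ m), f (i : ZMod (ℓ ^ m)) =
      (∑ i ∈ Finset.range s, f (i : ZMod (ℓ ^ m))) + q • ∑ x : ZMod (ℓ ^ m), f x := by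
  haveI : NeZero (ℓ ^ m) := ⟨pow_ne_zero _ (Fact.out : ℓ.Prime).pos.ne'⟩
  induction q with
  | zero => simp
  | succ q ih =>
    have h : s + (q + 1) * ℓ ^ m = (s + q * ℓ ^ m) + ℓ ^ m := by ring
    rw [h, Finset.sum_range_add, ih, succ_nsmul, ← add_assoc]
    congr 1
    exact stmt11_period ℓ m (s + q * ℓ ^ m) f

/-- Let `α = Σ a_ν ℓ^ν ∈ ℤ_ℓ` with digits `0 ≤ a_ν < ℓ` and let
`A_n = 1 + t + ⋯ + t^{c_n - 1}` with `c_n = Σ_{ν≤n} a_ν ℓ^ν`, viewed in the completed group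
algebra `ℤ_ℓ[[ℤ_ℓ]] = lim_m ℤ_ℓ[ℤ/ℓ^m]`.  Then `(A_n)` is Cauchy and converges.  An element of
the inverse limit is a compatible family of elements of the levels `ℤ_ℓ[ℤ/ℓ^m ℤ]`, each
carrying the `ℓ`-adic topology on coefficients; so Cauchyness/convergence is expressed
levelwise: at each level `m` and each precision `ℓ^k`, the images of `A_{n₁} - A_{n₂}` are
eventually divisible by `ℓ^k`, and there is a levelwise limit `L m`. -/
theorem stmt_11 (ℓ : ℕ) [Fact ℓ.Prime] (a : ℕ → ℕ) (ha : ∀ ν, a ν < ℓ)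
    (c : ℕ → ℕ) (hc : ∀ n, c n = ∑ ν ∈ Finset.range (n+1), a ν * ℓ ^ ν)
    (A : (m n : ℕ) → MonoidAlgebra ℤ_[ℓ] (Multiplicative (ZMod (ℓ ^ m))))
    (hA : ∀ m n, A m n = ∑ i ∈ Finset.range (c n),
      MonoidAlgebra.single (Multiplicative.ofAdd ((i : ZMod (ℓ ^ m)))) 1) :
    (∀ m k : ℕ, ∃ N, ∀ n₁ n₂, N ≤ n₁ → N ≤ n₂ →
      ∃ B, A m n₁ - A m n₂ = ((ℓ : ℤ_[ℓ]) ^ k) • B) ∧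
    (∀ m : ℕ, ∃ L, ∀ k : ℕ, ∃ N, ∀ n, N ≤ n →
      ∃ B, A m n - L = ((ℓ : ℤ_[ℓ]) ^ k) • B) := by
  haveI hne : ∀ m : ℕ, NeZero (ℓ ^ m) := fun m => ⟨pow_ne_zero _ (Fact.out : ℓ.Prime).pos.ne'⟩
  -- the digit tail function
  set d : ℕ → ℕ → ℕ := fun m n => ∑ j ∈ Finset.range (n - m), a ((m+1) + j) * ℓ ^ j with hd
  -- c n = c m + ℓ^(m+1) * d m n  for m ≤ n
  have hcd : ∀ m n : ℕ, m ≤ n → c n = c m + ℓ ^ (m + 1) * d m n := by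
    intro m n hmn
    have h1 : n + 1 = (m + 1) + (n - m) := by omega
    rw [hc n, hc m, h1, Finset.sum_range_add, hd]
    simp only
    rw [Finset.mul_sum]
    congr 1
    refine Finset.sum_congr rfl fun j _ => ?_
    rw [pow_add]
    ring
  -- the full-period sum
  have key : ∀ m n : ℕ, m ≤ n → A m n = A m m +
      (ℓ * d m n) • ∑ x : ZMod (ℓ ^ m),
        MonoidAlgebra.single (Multiplicative.ofAdd x) (1 : ℤ_[ℓ]) := by
    intro m n hmn
    rw [hA m n, hA m m, hcd m n hmn]
    have h2 : c m + ℓ ^ (m + 1) * d m n = c m + (ℓ * d m n) * ℓ ^ m := by ring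
    rw [h2]
    exact stmt11_block ℓ m (c m) (ℓ * d m n)
      (fun x => MonoidAlgebra.single (Multiplicative.ofAdd x) (1 : ℤ_[ℓ]))
  constructor
  · -- Cauchy
    intro m k
    refine ⟨m + k, ?_⟩
    -- helper for ordered pairs
    have main : ∀ n₁ n₂, m + k ≤ n₁ → n₁ ≤ n₂ →
        ∃ B, A m n₂ - A m n₁ = ((ℓ : ℤ_[ℓ]) ^ k) • B := by
      intro n₁ n₂ h1 h12
      have hm1 : m ≤ n₁ := by omega
      have hm2 : m ≤ n₂ := by omega
      -- d m n₂ = d m n₁ + ℓ^k * r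
      have hdd : d m n₂ = d m n₁ + ℓ ^ k *
          ∑ j ∈ Finset.range (n₂ - n₁), a ((m+1) + ((n₁ - m) + j)) * ℓ ^ ((n₁ - m - k) + j) := by
        have h3 : n₂ - m = (n₁ - m) + (n₂ - n₁) := by omega
        rw [hd]
        simp only
        rw [h3, Finset.sum_range_add, Finset.mul_sum]
        congr 1
        refine Finset.sum_congr rfl fun j _ => ?_
        have h4 : (n₁ - m) + j = k + ((n₁ - m - k) + j) := by omega
        rw [h4, pow_add]
        ring
      set S := ∑ x : ZMod (ℓ ^ m),
        MonoidAlgebra.single (Multiplicative.ofAdd x) (1 : ℤ_[ℓ]) with hS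
      set r := ∑ j ∈ Finset.range (n₂ - n₁), a ((m+1) + ((n₁ - m) + j)) * ℓ ^ ((n₁ - m - k) + j)
      refine ⟨((ℓ * r : ℕ) : ℤ_[ℓ]) • S, ?_⟩
      rw [key m n₁ hm1, key m n₂ hm2, hdd]
      have h5 : ℓ * (d m n₁ + ℓ ^ k * r) = ℓ * d m n₁ + ℓ ^ k * (ℓ * r) := by ring
      rw [h5, add_smul, add_sub_add_comm, sub_self, zero_add, add_sub_cancel_left]
      rw [← Nat.cast_smul_eq_nsmul ℤ_[ℓ], smul_smul]
      congr 1
      push_cast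
      ring
    intro n₁ n₂ h1 h2
    rcases le_total n₂ n₁ with h | h
    · exact main n₂ n₁ h2 h
    · obtain ⟨B, hB⟩ := main n₁ n₂ h1 h
      exact ⟨-B, by rw [← neg_sub, hB, smul_neg]⟩
  · -- Convergence
    intro m
    set S := ∑ x : ZMod (ℓ ^ m),
      MonoidAlgebra.single (Multiplicative.ofAdd x) (1 : ℤ_[ℓ]) with hS
    -- summability of digit tails
    have hsum : ∀ t : ℕ, Summable (fun ν : ℕ => ((a (t + ν) : ℤ_[ℓ]) * (ℓ : ℤ_[ℓ]) ^ ν)) := by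
      intro t
      have hlt : ‖((ℓ : ℤ_[ℓ]))‖ < 1 := PadicInt.norm_lt_one_iff_dvd _ |>.2 dvd_rfl
      refine Summable.of_norm_bounded (g := fun ν => ‖((ℓ : ℤ_[ℓ]))‖ ^ ν)
        (summable_geometric_of_lt_one (norm_nonneg _) hlt) (fun ν => ?_)
      calc ‖(a (t + ν) : ℤ_[ℓ]) * (ℓ : ℤ_[ℓ]) ^ ν‖
          = ‖(a (t + ν) : ℤ_[ℓ])‖ * ‖(ℓ : ℤ_[ℓ]) ^ ν‖ := norm_mul _ _
        _ ≤ 1 * ‖(ℓ : ℤ_[ℓ]) ^ ν‖ := by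
            exact mul_le_mul_of_nonneg_right (PadicInt.norm_le_one _) (norm_nonneg _)
        _ = ‖(ℓ : ℤ_[ℓ])‖ ^ ν := by rw [one_mul, norm_pow]
    set lam : ℤ_[ℓ] := ∑' ν : ℕ, (a ((m+1) + ν) : ℤ_[ℓ]) * (ℓ : ℤ_[ℓ]) ^ ν with hlam
    refine ⟨A m m + ((ℓ : ℤ_[ℓ]) * lam) • S, ?_⟩
    intro k
    refine ⟨m + k, fun n hn => ?_⟩
    have hmn : m ≤ n := by omega
    -- cast of d m n is a partial sum
    have hdc : ((d m n : ℕ) : ℤ_[ℓ]) =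
        ∑ j ∈ Finset.range (n - m), (a ((m+1) + j) : ℤ_[ℓ]) * (ℓ : ℤ_[ℓ]) ^ j := by
      rw [hd]; push_cast; rfl
    set mu : ℤ_[ℓ] := ∑' ν : ℕ, (a ((n+1) + ν) : ℤ_[ℓ]) * (ℓ : ℤ_[ℓ]) ^ ν with hmu
    -- tail identity
    have htail : lam - ((d m n : ℕ) : ℤ_[ℓ]) = (ℓ : ℤ_[ℓ]) ^ (n - m) * mu := by
      have h6 := Summable.sum_add_tsum_nat_add (f := fun ν : ℕ => (a ((m+1) + ν) : ℤ_[ℓ]) * (ℓ : ℤ_[ℓ]) ^ ν)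
        (n - m) (hsum (m+1))
      rw [hdc, hlam, ← h6, add_sub_cancel_left]
      have h7 : ∀ j : ℕ, (a ((m+1) + (j + (n - m))) : ℤ_[ℓ]) * (ℓ : ℤ_[ℓ]) ^ (j + (n - m)) =
          (ℓ : ℤ_[ℓ]) ^ (n - m) * ((a ((n+1) + j) : ℤ_[ℓ]) * (ℓ : ℤ_[ℓ]) ^ j) := by
        intro j
        have h8 : (m+1) + (j + (n - m)) = (n+1) + j := by omega
        have h9 : j + (n - m) = (n - m) + j := by omega
        rw [h8, h9, pow_add]
        ring
      rw [tsum_congr h7, Summable.tsum_mul_left _ (hsum (n+1)), hmu]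
    refine ⟨(-((ℓ : ℤ_[ℓ]) ^ ((n + 1 - m) - k) * mu)) • S, ?_⟩
    rw [key m n hmn, ← Nat.cast_smul_eq_nsmul ℤ_[ℓ]]
    rw [add_sub_add_comm, sub_self, zero_add, ← sub_smul, smul_smul]
    congr 1
    push_cast
    have h10 : (ℓ : ℤ_[ℓ]) * ((d m n : ℕ) : ℤ_[ℓ]) - (ℓ : ℤ_[ℓ]) * lam =
        -((ℓ : ℤ_[ℓ]) * ((ℓ : ℤ_[ℓ]) ^ (n - m) * mu)) := by
      rw [← mul_sub, ← neg_sub lam, htail]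
      ring
    rw [h10]
    have h11 : (ℓ : ℤ_[ℓ]) * (ℓ : ℤ_[ℓ]) ^ (n - m) =
        (ℓ : ℤ_[ℓ]) ^ k * (ℓ : ℤ_[ℓ]) ^ ((n + 1 - m) - k) := by
      rw [← pow_succ', ← pow_add]
      congr 1
      omega
    rw [← mul_assoc, h11]
    ring
end

section
/- In the free group on x_1,...,x_{s-1}, for 2 ≤ i, k ≤ s-1 and n ≥ 1, working modulo the commutator subgroup R' of R (the kernel of the winding number map), one has x_k^n x_i x_k^{-n} x_1^{-1} ≡ β_i^{t^n} · β_k^{1 - t^n}, where β_j = x_j x_1^{-1} and the exponent notation denotes the ℤ[t,t^{-1}]-module action by conjugation by x_1 on R/R'. -/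
private lemma key13 {Q : Type*} [Group Q] (K : Subgroup Q) (hN : K.Normal)
    (hcomm : ∀ x ∈ K, ∀ y ∈ K, x * y = y * x)
    (a b c : Q) (ha : a * c⁻¹ ∈ K) (hb : b * c⁻¹ ∈ K) (n : ℕ) :
    a ^ n * b * (a ^ n)⁻¹ * c⁻¹ =
      c ^ n * (b * c⁻¹) * (c ^ n)⁻¹ * (a * c⁻¹) *
        (c ^ n * (a * c⁻¹) * (c ^ n)⁻¹)⁻¹ := by
  have hconj : ∀ (g x : Q), x ∈ K → g * x * g⁻¹ ∈ K := fun g x hx => hN.conj_mem x hx g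
  have hdmem : ∀ m : ℕ, a ^ m * (c ^ m)⁻¹ ∈ K := by
    intro m
    induction m with
    | zero => simpa using K.one_mem
    | succ m ih =>
      have h1 : a ^ (m+1) * (c ^ (m+1))⁻¹
          = (a * c⁻¹) * (c * (a ^ m * (c ^ m)⁻¹) * c⁻¹) := by
        rw [pow_succ, pow_succ]; group
      rw [h1]
      exact K.mul_mem ha (hconj _ _ ih)
  have claim2 : ∀ m : ℕ, (a ^ m * (c ^ m)⁻¹) * (c * (a ^ m * (c ^ m)⁻¹) * c⁻¹)⁻¹
      = (a * c⁻¹) * (c ^ m * (a * c⁻¹) * (c ^ m)⁻¹)⁻¹ := by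
    intro m
    induction m with
    | zero => group
    | succ m ih =>
      have h1 : a ^ (m+1) * (c ^ (m+1))⁻¹
          = (a * c⁻¹) * (c * (a ^ m * (c ^ m)⁻¹) * c⁻¹) := by
        rw [pow_succ, pow_succ]; group
      calc (a ^ (m+1) * (c ^ (m+1))⁻¹) * (c * (a ^ (m+1) * (c ^ (m+1))⁻¹) * c⁻¹)⁻¹
          = (a*c⁻¹) * (c * ((a ^ m * (c ^ m)⁻¹) * (c * (a ^ m * (c ^ m)⁻¹) * c⁻¹)⁻¹) * c⁻¹)
              * (c*(a*c⁻¹)*c⁻¹)⁻¹ := by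
            rw [h1]; group
        _ = (a*c⁻¹) * (c * ((a*c⁻¹) * (c ^ m * (a*c⁻¹) * (c ^ m)⁻¹)⁻¹) * c⁻¹)
              * (c*(a*c⁻¹)*c⁻¹)⁻¹ := by rw [ih]
        _ = (a*c⁻¹) * ((c*(a*c⁻¹)*c⁻¹) *
              ((c ^ (m+1) * (a*c⁻¹) * (c ^ (m+1))⁻¹)⁻¹ * (c*(a*c⁻¹)*c⁻¹)⁻¹)) := by
            rw [pow_succ]; group
        _ = (a*c⁻¹) * ((c*(a*c⁻¹)*c⁻¹) *
              ((c*(a*c⁻¹)*c⁻¹)⁻¹ * (c ^ (m+1) * (a*c⁻¹) * (c ^ (m+1))⁻¹)⁻¹)) := by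
            rw [hcomm _ (K.inv_mem (hconj _ _ ha)) _ (K.inv_mem (hconj _ _ ha))]
        _ = (a*c⁻¹) * (c ^ (m+1) * (a*c⁻¹) * (c ^ (m+1))⁻¹)⁻¹ := by group
  have hb' : c ^ n * (b * c⁻¹) * (c ^ n)⁻¹ ∈ K := hconj _ _ hb
  calc a ^ n * b * (a ^ n)⁻¹ * c⁻¹
      = (a ^ n * (c ^ n)⁻¹) * (c ^ n * (b * c⁻¹) * (c ^ n)⁻¹)
          * (c * (a ^ n * (c ^ n)⁻¹) * c⁻¹)⁻¹ := by group
    _ = (c ^ n * (b * c⁻¹) * (c ^ n)⁻¹) * (a ^ n * (c ^ n)⁻¹)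
          * (c * (a ^ n * (c ^ n)⁻¹) * c⁻¹)⁻¹ := by rw [hcomm _ (hdmem n) _ hb']
    _ = (c ^ n * (b * c⁻¹) * (c ^ n)⁻¹) * ((a ^ n * (c ^ n)⁻¹)
          * (c * (a ^ n * (c ^ n)⁻¹) * c⁻¹)⁻¹) := by rw [mul_assoc]
    _ = (c ^ n * (b * c⁻¹) * (c ^ n)⁻¹) * ((a*c⁻¹) * (c ^ n * (a*c⁻¹) * (c ^ n)⁻¹)⁻¹) := by
        rw [claim2 n]
    _ = c ^ n * (b * c⁻¹) * (c ^ n)⁻¹ * (a * c⁻¹) *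
        (c ^ n * (a * c⁻¹) * (c ^ n)⁻¹)⁻¹ := by group

/-- In the free group on `x₁,…,x_{s-1}`, for indices `i, k` with
`2 ≤ i, k ≤ s-1` (i.e. `i, k ≠ ⟨0,_⟩`) and `n ≥ 1`, modulo the commutator subgroup `R'` of the
kernel `R` of the winding number map `α` one has
`x_k^n x_i x_k^{-n} x₁^{-1} ≡ β_i^{t^n} · β_k^{1-t^n}`, where `β_j = x_j x₁⁻¹` and `t` acts by
conjugation by `x₁`; multiplicatively the right-hand side is
`(x₁^n β_i x₁^{-n}) · β_k · (x₁^n β_k x₁^{-n})⁻¹`. -/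
theorem stmt_13 (s : ℕ) (hs : 3 ≤ s) (n : ℕ) (hn : 1 ≤ n)
    (α : FreeGroup (Fin (s-1)) →* Multiplicative ℤ)
    (hα : ∀ i, α (FreeGroup.of i) = Multiplicative.ofAdd 1)
    (i k : Fin (s-1)) (hi : i ≠ ⟨0, by omega⟩) (hk : k ≠ ⟨0, by omega⟩) :
    (FreeGroup.of k ^ n * FreeGroup.of i * (FreeGroup.of k ^ n)⁻¹ *
        (FreeGroup.of (⟨0, by omega⟩ : Fin (s-1)))⁻¹) *
      ((FreeGroup.of (⟨0, by omega⟩ : Fin (s-1)) ^ n *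
          (FreeGroup.of i * (FreeGroup.of (⟨0, by omega⟩ : Fin (s-1)))⁻¹) *
            (FreeGroup.of (⟨0, by omega⟩ : Fin (s-1)) ^ n)⁻¹) *
        (FreeGroup.of k * (FreeGroup.of (⟨0, by omega⟩ : Fin (s-1)))⁻¹) *
        (FreeGroup.of (⟨0, by omega⟩ : Fin (s-1)) ^ n *
          (FreeGroup.of k * (FreeGroup.of (⟨0, by omega⟩ : Fin (s-1)))⁻¹) *
            (FreeGroup.of (⟨0, by omega⟩ : Fin (s-1)) ^ n)⁻¹)⁻¹)⁻¹ ∈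
      Subgroup.map α.ker.subtype (commutator ↥α.ker) := by
  have hmap : Subgroup.map α.ker.subtype (commutator ↥α.ker) = ⁅α.ker, α.ker⁆ := by
    rw [commutator_def, Subgroup.map_commutator, ← MonoidHom.range_eq_map,
      Subgroup.range_subtype]
  rw [hmap, ← QuotientGroup.eq_one_iff]
  set N := ⁅α.ker, α.ker⁆ with hNdef
  set f : FreeGroup (Fin (s-1)) →* FreeGroup (Fin (s-1)) ⧸ N := QuotientGroup.mk' N with hf
  have hone : ∀ x : FreeGroup (Fin (s-1)), x ∈ N → f x = 1 := fun x hx =>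
    (QuotientGroup.eq_one_iff x).mpr hx
  set K : Subgroup (FreeGroup (Fin (s-1)) ⧸ N) := Subgroup.map f α.ker with hK
  have hKN : K.Normal := Subgroup.Normal.map (MonoidHom.normal_ker α) f
    (QuotientGroup.mk'_surjective N)
  have hcomm : ∀ x ∈ K, ∀ y ∈ K, x * y = y * x := by
    rintro _ ⟨u, hu, rfl⟩ _ ⟨v, hv, rfl⟩
    rw [← map_mul, ← map_mul, ← mul_inv_eq_one, ← map_inv, ← map_mul]
    apply hone
    have h : (open scoped commutatorElement in ⁅u, v⁆) ∈ N := Subgroup.commutator_mem_commutator hu hv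
    simpa [commutatorElement_def, mul_inv_rev, mul_assoc] using h
  have hker : ∀ j : Fin (s-1),
      FreeGroup.of j * (FreeGroup.of (⟨0, by omega⟩ : Fin (s-1)))⁻¹ ∈ α.ker := by
    intro j
    rw [MonoidHom.mem_ker, map_mul, map_inv, hα, hα, mul_inv_cancel]
  have ha : f (FreeGroup.of k) * (f (FreeGroup.of (⟨0, by omega⟩ : Fin (s-1))))⁻¹ ∈ K := by
    rw [← map_inv, ← map_mul]
    exact Subgroup.mem_map_of_mem f (hker k)
  have hb : f (FreeGroup.of i) * (f (FreeGroup.of (⟨0, by omega⟩ : Fin (s-1))))⁻¹ ∈ K := by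
    rw [← map_inv, ← map_mul]
    exact Subgroup.mem_map_of_mem f (hker i)
  show f _ = 1
  rw [map_mul, map_inv, map_mul, map_mul, map_mul, map_mul, map_inv, map_inv, map_mul,
    map_mul, map_inv, map_pow, map_pow, map_mul, map_inv, map_mul, map_mul, map_inv,
    map_pow, mul_inv_eq_one]
  exact key13 K hKN hcomm (f (FreeGroup.of k)) (f (FreeGroup.of i))
    (f (FreeGroup.of (⟨0, by omega⟩ : Fin (s-1)))) ha hb n
end
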